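/- Let n ≥ 2 be an integer and let 0 < H ≤ (n-1)/n. Then M_{H,0}(t) > 0 and P_{H,0}(t) > 0 for all t > 0, and the function Q_{H,0} is strictly increasing on (0, ∞); equivalently, the height function λ(ρ) := ∫₀^{ρ} Q_{H,0}(t) dt of the rotation H-hypersurface with d = 0 is strictly convex on (0, ∞). -/

import Mathlib

open Filter Topology

/-- `Ifun m t = ∫₀ᵗ sinh^m(r) dr`. -/
noncomputable def Ifun (m : ℕ) (t : ℝ) : ℝ := ∫ r in (0:ℝ)..t, Real.sinh r ^ m

/-- `Mfun n H d t = sinh^{n-1}(t) − nH·I_{n-1}(t) − d`. -/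
noncomputable def Mfun (n : ℕ) (H d t : ℝ) : ℝ :=
  Real.sinh t ^ (n - 1) - n * H * Ifun (n - 1) t - d

/-- `Pfun n H d t = sinh^{n-1}(t) + nH·I_{n-1}(t) + d`. -/
noncomputable def Pfun (n : ℕ) (H d t : ℝ) : ℝ :=
  Real.sinh t ^ (n - 1) + n * H * Ifun (n - 1) t + d

/-- `Qfun n H d t = (nH·I_{n-1}(t) + d)/√(M·P)`. -/
noncomputable def Qfun (n : ℕ) (H d t : ℝ) : ℝ :=
  (n * H * Ifun (n - 1) t + d) / Real.sqrt (Mfun n H d t * Pfun n H d t)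

namespace Stmt12Aux

open Real MeasureTheory intervalIntegral

lemma cont_integrand (m : ℕ) : Continuous fun r : ℝ => Real.sinh r ^ m :=
  Real.continuous_sinh.pow m

lemma hasDerivAt_Ifun (m : ℕ) (t : ℝ) : HasDerivAt (Ifun m) (Real.sinh t ^ m) t := by
  have hc := cont_integrand m
  exact intervalIntegral.integral_hasDerivAt_right (hc.intervalIntegrable 0 t)
    (hc.stronglyMeasurable.stronglyMeasurableAtFilter) hc.continuousAt

lemma Ifun_zero (m : ℕ) : Ifun m 0 = 0 := intervalIntegral.integral_same

lemma Ifun_nonneg (m : ℕ) {t : ℝ} (ht : 0 ≤ t) : 0 ≤ Ifun m t :=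
  intervalIntegral.integral_nonneg ht fun u hu => pow_nonneg (Real.sinh_nonneg_iff.2 hu.1) m

lemma Ifun_pos (m : ℕ) {t : ℝ} (ht : 0 < t) : 0 < Ifun m t :=
  intervalIntegral.intervalIntegral_pos_of_pos_on
    ((cont_integrand m).intervalIntegrable 0 t)
    (fun x hx => pow_pos (Real.sinh_pos_iff.2 hx.1) m) ht

lemma continuous_Ifun (m : ℕ) : Continuous (Ifun m) :=
  continuous_iff_continuousAt.2 fun t => (hasDerivAt_Ifun m t).continuousAt

lemma sinh_pow_pos (m : ℕ) {t : ℝ} (ht : 0 < t) : 0 < Real.sinh t ^ m :=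
  pow_pos (Real.sinh_pos_iff.2 ht) m

/-- derivative of `sinh ^ (k+1)` -/
lemma hasDerivAt_sinh_pow (k : ℕ) (t : ℝ) :
    HasDerivAt (fun t => Real.sinh t ^ (k + 1))
      ((k + 1 : ℝ) * Real.sinh t ^ k * Real.cosh t) t := by
  have := (Real.hasDerivAt_sinh t).pow (k + 1)
  exact this.congr_deriv (by simp)

/-- Key lemma: `c · I_{k+1}(t) < sinh^{k+1} t` for `0 ≤ c ≤ k+1`, `t > 0`. -/
lemma key_M (k : ℕ) {c : ℝ} (hc0 : 0 ≤ c) (hc : c ≤ (k : ℝ) + 1) {t : ℝ} (ht : 0 < t) :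
    c * Ifun (k + 1) t < Real.sinh t ^ (k + 1) := by
  set f : ℝ → ℝ := fun t => Real.sinh t ^ (k + 1) - c * Ifun (k + 1) t with hf
  have hder : ∀ x : ℝ, HasDerivAt f
      ((k + 1 : ℝ) * Real.sinh x ^ k * Real.cosh x - c * Real.sinh x ^ (k + 1)) x :=
    fun x => (hasDerivAt_sinh_pow k x).sub ((hasDerivAt_Ifun (k + 1) x).const_mul c)
  have hmono : StrictMonoOn f (Set.Ici 0) := by
    apply strictMonoOn_of_deriv_pos (convex_Ici 0)
      (fun x _ => (hder x).continuousAt.continuousWithinAt)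
    intro x hx
    rw [interior_Ici] at hx
    rw [(hder x).deriv]
    have hs := Real.sinh_pos_iff.2 hx
    have hsp := sinh_pow_pos k hx
    have h1 : c * Real.sinh x ≤ ((k : ℝ) + 1) * Real.sinh x :=
      mul_le_mul_of_nonneg_right hc hs.le
    have h2 : Real.sinh x < Real.cosh x := Real.sinh_lt_cosh x
    have h3 : c * Real.sinh x ^ (k + 1) ≤ ((k : ℝ) + 1) * Real.sinh x ^ k * Real.sinh x := by
      rw [pow_succ]
      nlinarith [mul_le_mul_of_nonneg_right h1 hsp.le]
    have h4 : ((k : ℝ) + 1) * Real.sinh x ^ k * Real.sinh x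
        < ((k : ℝ) + 1) * Real.sinh x ^ k * Real.cosh x :=
      mul_lt_mul_of_pos_left h2 (by positivity)
    linarith
  have h0 : f 0 = 0 := by simp [hf, Ifun_zero]
  have h1 := hmono (Set.self_mem_Ici) (Set.mem_Ici.2 ht.le) ht
  rw [h0] at h1
  simp only [hf] at h1
  linarith

/-- Key lemma: `(k+1)·cosh t · I_{k+1}(t) < sinh^{k+2} t` for `t > 0`. -/
lemma key_g (k : ℕ) {t : ℝ} (ht : 0 < t) :
    ((k : ℝ) + 1) * Real.cosh t * Ifun (k + 1) t < Real.sinh t ^ (k + 2) := by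
  set I : ℝ → ℝ := Ifun (k + 1)
  set g : ℝ → ℝ := fun t => Real.sinh t ^ (k + 2) - ((k : ℝ) + 1) * Real.cosh t * I t with hgdef
  set g₁ : ℝ → ℝ := fun t =>
    Real.sinh t ^ (k + 1) * Real.cosh t - ((k : ℝ) + 1) * Real.sinh t * I t with hg1def
  have hdg : ∀ x : ℝ, HasDerivAt g (g₁ x) x := by
    intro x
    have h1 : HasDerivAt (fun t => Real.sinh t ^ (k + 2))
        (((k : ℝ) + 1 + 1) * Real.sinh x ^ (k + 1) * Real.cosh x) x := by
      have := hasDerivAt_sinh_pow (k + 1) x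
      convert this using 2 <;> push_cast <;> ring
    have h2 : HasDerivAt (fun t => ((k : ℝ) + 1) * Real.cosh t * I t)
        (((k : ℝ) + 1) * Real.sinh x * I x
          + ((k : ℝ) + 1) * Real.cosh x * Real.sinh x ^ (k + 1)) x := by
      have := (((Real.hasDerivAt_cosh x).const_mul ((k : ℝ) + 1)).mul
        (hasDerivAt_Ifun (k + 1) x))
      exact this
    have := h1.sub h2
    refine this.congr_deriv (Eq.symm ?_)
    simp only [hg1def]
    ring
  have hdg1 : ∀ x : ℝ, HasDerivAt g₁
      (g x + ((k : ℝ) + 1) * Real.sinh x ^ k) x := by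
    intro x
    have h1 : HasDerivAt (fun t => Real.sinh t ^ (k + 1) * Real.cosh t)
        (((k : ℝ) + 1) * Real.sinh x ^ k * Real.cosh x * Real.cosh x
          + Real.sinh x ^ (k + 1) * Real.sinh x) x :=
      (hasDerivAt_sinh_pow k x).mul (Real.hasDerivAt_cosh x)
    have h2 : HasDerivAt (fun t => ((k : ℝ) + 1) * Real.sinh t * I t)
        (((k : ℝ) + 1) * Real.cosh x * I x
          + ((k : ℝ) + 1) * Real.sinh x * Real.sinh x ^ (k + 1)) x := by
      have := (((Real.hasDerivAt_sinh x).const_mul ((k : ℝ) + 1)).mul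
        (hasDerivAt_Ifun (k + 1) x))
      exact this
    have := h1.sub h2
    refine this.congr_deriv (Eq.symm ?_)
    have hch : Real.cosh x ^ 2 = 1 + Real.sinh x ^ 2 := by
      have := Real.cosh_sq x; linarith
    simp only [hgdef]
    linear_combination (-((k:ℝ) + 1) * Real.sinh x ^ k) * hch
  -- w = exp(-t) * (g₁ + g) is strictly increasing on [0, ∞), w 0 = 0
  set w : ℝ → ℝ := fun t => Real.exp (-t) * (g₁ t + g t) with hwdef
  have hdw : ∀ x : ℝ, HasDerivAt w
      (Real.exp (-x) * (((k : ℝ) + 1) * Real.sinh x ^ k)) x := by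
    intro x
    have he : HasDerivAt (fun t : ℝ => Real.exp (-t)) (-Real.exp (-x)) x := by
      exact ((Real.hasDerivAt_exp (-x)).comp x ((hasDerivAt_id x).neg)).congr_deriv (by simp)
    have := he.mul ((hdg1 x).add (hdg x))
    refine this.congr_deriv (Eq.symm ?_)
    rw [Pi.add_apply]
    ring
  have hI0 : I 0 = 0 := Ifun_zero _
  have hw0 : w 0 = 0 := by
    simp [hwdef, hg1def, hgdef, hI0]
  have hwmono : StrictMonoOn w (Set.Ici 0) := by
    apply strictMonoOn_of_deriv_pos (convex_Ici 0)
      (fun x _ => (hdw x).continuousAt.continuousWithinAt)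
    intro x hx
    rw [interior_Ici] at hx
    rw [(hdw x).deriv]
    exact mul_pos (Real.exp_pos _)
      (mul_pos (by positivity) (sinh_pow_pos k hx))
  have hwpos : ∀ x : ℝ, 0 < x → 0 < w x := by
    intro x hx
    have := hwmono Set.self_mem_Ici (Set.mem_Ici.2 hx.le) hx
    rwa [hw0] at this
  -- v = exp t * g is strictly increasing on [0, ∞), v 0 = 0
  set v : ℝ → ℝ := fun t => Real.exp t * g t with hvdef
  have hdv : ∀ x : ℝ, HasDerivAt v (Real.exp x * Real.exp x * w x) x := by
    intro x
    have := (Real.hasDerivAt_exp x).mul (hdg x)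
    refine this.congr_deriv (Eq.symm ?_)
    simp only [hwdef, hvdef]
    have hxx : Real.exp x * Real.exp (-x) = 1 := by rw [← Real.exp_add]; simp
    linear_combination Real.exp x * (g₁ x + g x) * hxx
  have hv0 : v 0 = 0 := by simp [hvdef, hgdef, hI0]
  have hvmono : StrictMonoOn v (Set.Ici 0) := by
    apply strictMonoOn_of_deriv_pos (convex_Ici 0)
      (fun x _ => (hdv x).continuousAt.continuousWithinAt)
    intro x hx
    rw [interior_Ici] at hx
    rw [(hdv x).deriv]
    exact mul_pos (mul_pos (Real.exp_pos _) (Real.exp_pos _)) (hwpos x hx)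
  have hvpos := hvmono Set.self_mem_Ici (Set.mem_Ici.2 ht.le) ht
  rw [hv0] at hvpos
  have hexp : (0 : ℝ) < Real.exp t := Real.exp_pos t
  have hveq : v t = Real.exp t * g t := rfl
  have hg : 0 < g t := by
    by_contra h
    push_neg at h
    nlinarith [hvpos, hveq]
  simp only [hgdef] at hg
  linarith

end Stmt12Aux

/-- Let `n ≥ 2` and `0 < H ≤ (n-1)/n`. Then `M_{H,0}(t) > 0` and `P_{H,0}(t) > 0` for all
`t > 0`, `Q_{H,0}` is strictly increasing on `(0,∞)`; equivalently, the height function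
`λ(ρ) := ∫₀^{ρ} Q_{H,0}(t) dt` is strictly convex on `(0,∞)`. -/
theorem stmt12 (n : ℕ) (hn : 2 ≤ n) (H : ℝ) (hH0 : 0 < H) (hH1 : H ≤ ((n : ℝ) - 1) / n) :
    (∀ t : ℝ, 0 < t → 0 < Mfun n H 0 t ∧ 0 < Pfun n H 0 t) ∧
    StrictMonoOn (Qfun n H 0) (Set.Ioi 0) ∧
    StrictConvexOn ℝ (Set.Ioi 0) (fun ρ : ℝ => ∫ t in (0:ℝ)..ρ, Qfun n H 0 t) := by
  classical
  obtain ⟨k, rfl⟩ : ∃ k, n = k + 2 := ⟨n - 2, by omega⟩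
  clear hn
  open Real Stmt12Aux in
  set c : ℝ := ((k : ℝ) + 2) * H with hc
  have hcpos : 0 < c := by positivity
  have hck : c ≤ (k : ℝ) + 1 := by
    push_cast at hH1
    rw [le_div_iff₀ (by positivity : (0:ℝ) < (k:ℝ) + 2)] at hH1
    nlinarith
  have hcast : ((k + 2 : ℕ) : ℝ) * H = c := by push_cast; ring
  -- abbreviations
  set u : ℝ → ℝ := fun t => c * Ifun (k + 1) t with hu
  set s : ℝ → ℝ := fun t => Real.sinh t ^ (k + 1) with hs
  have hMeq : ∀ t, Mfun (k + 2) H 0 t = s t - u t := by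
    intro t
    show Real.sinh t ^ (k + 1) - ((k + 2 : ℕ) : ℝ) * H * Ifun (k + 1) t - 0 = _
    rw [hcast]; simp [hu, hs]
  have hPeq : ∀ t, Pfun (k + 2) H 0 t = s t + u t := by
    intro t
    show Real.sinh t ^ (k + 1) + ((k + 2 : ℕ) : ℝ) * H * Ifun (k + 1) t + 0 = _
    rw [hcast]; simp [hu, hs]
  have hQeq0 : ∀ t, Qfun (k + 2) H 0 t
      = u t / Real.sqrt (Mfun (k + 2) H 0 t * Pfun (k + 2) H 0 t) := by
    intro t
    show (((k + 2 : ℕ) : ℝ) * H * Ifun (k + 1) t + 0) / _ = _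
    rw [hcast]; simp [hu]
  have hspos : ∀ t : ℝ, 0 < t → 0 < s t := fun t ht => sinh_pow_pos (k + 1) ht
  have hupos : ∀ t : ℝ, 0 < t → 0 < u t := fun t ht => mul_pos hcpos (Ifun_pos _ ht)
  have hus : ∀ t : ℝ, 0 < t → u t < s t := fun t ht => key_M k hcpos.le hck ht
  -- positivity of M and P
  have hMpos : ∀ t : ℝ, 0 < t → 0 < Mfun (k + 2) H 0 t := by
    intro t ht; rw [hMeq]; linarith [hus t ht]
  have hPpos : ∀ t : ℝ, 0 < t → 0 < Pfun (k + 2) H 0 t := by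
    intro t ht; rw [hPeq]; linarith [hus t ht, hupos t ht, hspos t ht]
  -- the ratio R
  set R : ℝ → ℝ := fun t => u t / s t with hR
  have hR01 : ∀ t : ℝ, 0 < t → 0 < R t ∧ R t < 1 := by
    intro t ht
    constructor
    · exact div_pos (hupos t ht) (hspos t ht)
    · rw [hR]; exact (div_lt_one (hspos t ht)).2 (hus t ht)
  -- Q in terms of R
  have hQeq : ∀ t : ℝ, 0 < t →
      Qfun (k + 2) H 0 t = R t / Real.sqrt (1 - R t ^ 2) := by
    intro t ht
    have hst := hspos t ht
    have hut := hupos t ht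
    have hust := hus t ht
    have hMP : Mfun (k + 2) H 0 t * Pfun (k + 2) H 0 t = s t ^ 2 - u t ^ 2 := by
      rw [hMeq, hPeq]; ring
    have hpos2 : 0 < s t ^ 2 - u t ^ 2 := by nlinarith
    have h1 : (1 : ℝ) - R t ^ 2 = (s t ^ 2 - u t ^ 2) / s t ^ 2 := by
      rw [hR]; field_simp
    have h2 : Real.sqrt (1 - R t ^ 2) = Real.sqrt (s t ^ 2 - u t ^ 2) / s t := by
      rw [h1, Real.sqrt_div hpos2.le, Real.sqrt_sq hst.le]
    rw [hQeq0, hMP, h2, hR]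
    have hsq : 0 < Real.sqrt (s t ^ 2 - u t ^ 2) := Real.sqrt_pos.2 hpos2
    field_simp
  -- R is strictly monotone on (0, ∞)
  have hRder : ∀ x : ℝ, 0 < x → HasDerivAt R
      ((c * Real.sinh x ^ (k + 1) * s x
        - u x * (((k : ℝ) + 1) * Real.sinh x ^ k * Real.cosh x)) / s x ^ 2) x := by
    intro x hx
    exact ((hasDerivAt_Ifun (k + 1) x).const_mul c).div (hasDerivAt_sinh_pow k x)
      (ne_of_gt (hspos x hx))
  have hRmono : StrictMonoOn R (Set.Ioi 0) := by
    apply strictMonoOn_of_deriv_pos (convex_Ioi 0)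
      (fun x hx => ((hRder x hx).continuousAt).continuousWithinAt)
    intro x hx
    rw [interior_Ioi] at hx
    rw [(hRder x hx).deriv]
    apply div_pos _ (pow_pos (hspos x hx) 2)
    have hg := key_g k hx
    have hshx := Real.sinh_pos_iff.2 hx
    have hnum : c * Real.sinh x ^ (k + 1) * s x
        - u x * (((k : ℝ) + 1) * Real.sinh x ^ k * Real.cosh x)
        = c * Real.sinh x ^ k
          * (Real.sinh x ^ (k + 2) - ((k : ℝ) + 1) * Real.cosh x * Ifun (k + 1) x) := by
      simp only [hu, hs]; ring
    rw [hnum]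
    have := sinh_pow_pos k hx
    apply mul_pos (mul_pos hcpos this)
    linarith
  -- Q is strictly monotone on (0, ∞)
  have hQmono : StrictMonoOn (Qfun (k + 2) H 0) (Set.Ioi 0) := by
    intro a ha b hb hab
    rw [Set.mem_Ioi] at ha hb
    rw [hQeq a ha, hQeq b hb]
    obtain ⟨hRa0, hRa1⟩ := hR01 a ha
    obtain ⟨hRb0, hRb1⟩ := hR01 b hb
    have hRab : R a < R b := hRmono (Set.mem_Ioi.2 ha) (Set.mem_Ioi.2 hb) hab
    have d1 : 0 < 1 - R b ^ 2 := by nlinarith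
    have d2 : 1 - R b ^ 2 ≤ 1 - R a ^ 2 := by nlinarith
    have hsb : 0 < Real.sqrt (1 - R b ^ 2) := Real.sqrt_pos.2 d1
    calc R a / Real.sqrt (1 - R a ^ 2)
        ≤ R a / Real.sqrt (1 - R b ^ 2) :=
          div_le_div_of_nonneg_left hRa0.le hsb (Real.sqrt_le_sqrt d2)
      _ < R b / Real.sqrt (1 - R b ^ 2) := by gcongr
  -- continuity of Q on (0, ∞)
  have hQcont : ContinuousOn (Qfun (k + 2) H 0) (Set.Ioi 0) := by
    have hnum : Continuous fun t : ℝ =>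
        ((k + 2 : ℕ) : ℝ) * H * Ifun (k + 1) t + 0 :=
      ((continuous_const.mul (continuous_Ifun (k + 1))).add continuous_const)
    have hM : Continuous fun t : ℝ => Mfun (k + 2) H 0 t := by
      simp only [Mfun]
      exact ((Real.continuous_sinh.pow _).sub
        (continuous_const.mul (continuous_Ifun _))).sub continuous_const
    have hP : Continuous fun t : ℝ => Pfun (k + 2) H 0 t := by
      simp only [Pfun]
      exact ((Real.continuous_sinh.pow _).add
        (continuous_const.mul (continuous_Ifun _))).add continuous_const
    have hden : Continuous fun t : ℝ =>
        Real.sqrt (Mfun (k + 2) H 0 t * Pfun (k + 2) H 0 t) :=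
      Real.continuous_sqrt.comp (hM.mul hP)
    apply ContinuousOn.div hnum.continuousOn hden.continuousOn
    intro x hx
    rw [Set.mem_Ioi] at hx
    exact ne_of_gt (Real.sqrt_pos.2 (mul_pos (hMpos x hx) (hPpos x hx)))
  -- Q is nonnegative on [0, ∞)
  have hQnonneg : ∀ t : ℝ, 0 ≤ t → 0 ≤ Qfun (k + 2) H 0 t := by
    intro t ht
    rw [hQeq0]
    exact div_nonneg (mul_nonneg hcpos.le (Ifun_nonneg _ ht)) (Real.sqrt_nonneg _)
  have hQ0 : Qfun (k + 2) H 0 0 = 0 := by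
    rw [hQeq0]
    simp [hu, Ifun_zero]
  -- interval integrability of Q
  have hint : ∀ ρ : ℝ, 0 < ρ → IntervalIntegrable (Qfun (k + 2) H 0)
      MeasureTheory.volume 0 ρ := by
    intro ρ hρ
    apply MonotoneOn.intervalIntegrable
    rw [Set.uIcc_of_le hρ.le]
    intro x hx y hy hxy
    rcases hx.1.eq_or_lt with h0 | h0
    · rw [← h0, hQ0]; exact hQnonneg y hy.1
    · rcases hxy.eq_or_lt with rfl | hlt
      · exact le_rfl
      · exact (hQmono (Set.mem_Ioi.2 h0) (Set.mem_Ioi.2 (h0.trans hlt)) hlt).le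
  -- derivative of the height function
  have hder : ∀ ρ : ℝ, 0 < ρ →
      HasDerivAt (fun ρ : ℝ => ∫ t in (0:ℝ)..ρ, Qfun (k + 2) H 0 t)
        (Qfun (k + 2) H 0 ρ) ρ := by
    intro ρ hρ
    exact intervalIntegral.integral_hasDerivAt_right (hint ρ hρ)
      (ContinuousOn.stronglyMeasurableAtFilter isOpen_Ioi hQcont ρ (Set.mem_Ioi.2 hρ))
      (hQcont.continuousAt (isOpen_Ioi.mem_nhds (Set.mem_Ioi.2 hρ)))
  refine ⟨fun t ht => ⟨hMpos t ht, hPpos t ht⟩, hQmono, ?_⟩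
  apply StrictMonoOn.strictConvexOn_of_deriv (convex_Ioi 0)
  · exact fun ρ hρ => (hder ρ (Set.mem_Ioi.1 hρ)).continuousAt.continuousWithinAt
  · rw [interior_Ioi]
    intro a ha b hb hab
    rw [(hder a (Set.mem_Ioi.1 ha)).deriv, (hder b (Set.mem_Ioi.1 hb)).deriv]
    exact hQmono ha hb hab
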